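/- Consider the gateway model with drift bound D ≥ 0, mixing weight β ∈ ℝ and maximal delay K ≥ 1 in a real inner product space H: iterates ω : ℕ → H, a delay function ζ : ℕ → ℕ with ζ(z) ≤ z − 1 and z − ζ(z) ≤ K for all z ≥ 1, updates u : ℕ → H with ‖u(z) − ω(ζ(z))‖ ≤ D for all z ≥ 1, and update rule ω(z) = (1−β)·ω(z−1) + β·u(z) for z ≥ 1; set R(z) = ‖ω(ζ(z)) − ω(z−1)‖² for z ≥ 1 and R(z) = 0 for z ≤ 0. Then for every z ≥ 1: R(z) ≤ 2(K−1)β²·( (K−1)·D² + ∑_{r=1}^{K−1} R(z−r) ). -/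

import Mathlib

/-- Deterministic counterpart of Lemma 3 (Gateway delay recursion) of the
Async-HFL convergence analysis: the squared staleness residual
`R(z) = ‖ω(ζ(z)) − ω(z−1)‖²` of an asynchronous gateway with drift bound `D`,
mixing weight `β` and maximal delay `K` satisfies the stated recursion. -/
theorem asyncHFL_gateway_delay_recursion
    {H : Type*} [NormedAddCommGroup H] [InnerProductSpace ℝ H]
    (D β : ℝ) (K : ℕ) (hD : 0 ≤ D) (hK : 1 ≤ K)
    (ω u : ℕ → H) (ζ : ℕ → ℕ) (R : ℤ → ℝ)
    (hζ : ∀ z : ℕ, 1 ≤ z → ζ z ≤ z - 1)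
    (hζK : ∀ z : ℕ, 1 ≤ z → z - ζ z ≤ K)
    (hu : ∀ z : ℕ, 1 ≤ z → ‖u z - ω (ζ z)‖ ≤ D)
    (hω : ∀ z : ℕ, 1 ≤ z → ω z = (1 - β) • ω (z - 1) + β • u z)
    (hR : ∀ z : ℕ, 1 ≤ z → R z = ‖ω (ζ z) - ω (z - 1)‖ ^ 2)
    (hR0 : ∀ z : ℤ, z ≤ 0 → R z = 0) :
    ∀ z : ℕ, 1 ≤ z →
      R z ≤ 2 * ((K : ℝ) - 1) * β ^ 2 *
        (((K : ℝ) - 1) * D ^ 2 + ∑ r ∈ Finset.Icc 1 (K - 1), R ((z : ℤ) - (r : ℤ))) := by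
  have hRnonneg : ∀ y : ℤ, 0 ≤ R y := by
    intro y
    rcases le_or_gt y 0 with h | h
    · rw [hR0 y h]
    · lift y to ℕ using h.le
      have hy : 1 ≤ y := by exact_mod_cast h
      rw [hR y hy]; positivity
  intro z hz
  set m : ℕ := z - 1 - ζ z with hm
  have hζz := hζ z hz
  have hζKz := hζK z hz
  have hmK : m ≤ K - 1 := by omega
  have hzm : z - 1 = ζ z + m := by omega
  -- telescoping
  have htel : ω (z - 1) - ω (ζ z)
      = ∑ i ∈ Finset.range m, (ω (ζ z + (i + 1)) - ω (ζ z + i)) := by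
    rw [Finset.sum_range_sub (fun i => ω (ζ z + i))]
    simp [hzm]
  -- per-step identity
  have hstep : ∀ i : ℕ, ω (ζ z + (i + 1)) - ω (ζ z + i)
      = β • (u (ζ z + (i + 1)) - ω (ζ z + i)) := by
    intro i
    have h1 : (1 : ℕ) ≤ ζ z + (i + 1) := by omega
    have h2 : ζ z + (i + 1) - 1 = ζ z + i := by omega
    rw [hω _ h1, h2, sub_smul, one_smul, smul_sub]
    abel
  -- the scalar bound for each step
  set s : ℕ → ℝ := fun j => ‖ω (ζ j) - ω (j - 1)‖ with hs
  have hnormstep : ∀ i : ℕ, ‖ω (ζ z + (i + 1)) - ω (ζ z + i)‖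
      ≤ |β| * (D + s (ζ z + (i + 1))) := by
    intro i
    rw [hstep i, norm_smul, Real.norm_eq_abs]
    have h1 : (1 : ℕ) ≤ ζ z + (i + 1) := by omega
    have h2 : ζ z + (i + 1) - 1 = ζ z + i := by omega
    have htri : ‖u (ζ z + (i + 1)) - ω (ζ z + i)‖
        ≤ D + s (ζ z + (i + 1)) := by
      have := norm_sub_le_norm_sub_add_norm_sub
        (u (ζ z + (i + 1))) (ω (ζ (ζ z + (i + 1)))) (ω (ζ z + i))
      calc ‖u (ζ z + (i + 1)) - ω (ζ z + i)‖
          ≤ ‖u (ζ z + (i + 1)) - ω (ζ (ζ z + (i + 1)))‖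
            + ‖ω (ζ (ζ z + (i + 1))) - ω (ζ z + i)‖ := this
        _ ≤ D + s (ζ z + (i + 1)) := by
            apply add_le_add (hu _ h1)
            simp only [hs, h2]
            exact le_refl _
    exact mul_le_mul_of_nonneg_left htri (abs_nonneg β)
  -- norm bound on the residual
  have hnorm : ‖ω (ζ z) - ω (z - 1)‖
      ≤ ∑ i ∈ Finset.range m, |β| * (D + s (ζ z + (i + 1))) := by
    rw [← norm_neg, neg_sub, htel]
    exact (norm_sum_le _ _).trans (Finset.sum_le_sum fun i _ => hnormstep i)
  -- square it
  have hA_nonneg : (0 : ℝ) ≤ ∑ i ∈ Finset.range m, |β| * (D + s (ζ z + (i + 1))) :=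
    le_trans (norm_nonneg _) hnorm
  have hsq : R z ≤ (∑ i ∈ Finset.range m, |β| * (D + s (ζ z + (i + 1)))) ^ 2 := by
    rw [hR z hz]
    exact pow_le_pow_left₀ (norm_nonneg _) hnorm 2
  -- Cauchy-Schwarz
  have hcs : (∑ i ∈ Finset.range m, |β| * (D + s (ζ z + (i + 1)))) ^ 2
      ≤ (m : ℝ) * ∑ i ∈ Finset.range m, (|β| * (D + s (ζ z + (i + 1)))) ^ 2 := by
    have := sq_sum_le_card_mul_sum_sq
      (s := Finset.range m) (f := fun i => |β| * (D + s (ζ z + (i + 1))))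
    simpa using this
  -- per-term square bound
  have hterm : ∀ i : ℕ, (|β| * (D + s (ζ z + (i + 1)))) ^ 2
      ≤ 2 * β ^ 2 * (D ^ 2 + R (↑(ζ z + (i + 1)))) := by
    intro i
    have h1 : (1 : ℕ) ≤ ζ z + (i + 1) := by omega
    have hRj : R (↑(ζ z + (i + 1))) = s (ζ z + (i + 1)) ^ 2 := hR _ h1
    rw [hRj, mul_pow, sq_abs]
    have hsn : 0 ≤ s (ζ z + (i + 1)) := norm_nonneg _
    nlinarith [sq_nonneg (D - s (ζ z + (i + 1))), sq_nonneg β]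
  have hsum : ∑ i ∈ Finset.range m, (|β| * (D + s (ζ z + (i + 1)))) ^ 2
      ≤ 2 * β ^ 2 * ((m : ℝ) * D ^ 2 + ∑ i ∈ Finset.range m, R (↑(ζ z + (i + 1)))) := by
    calc ∑ i ∈ Finset.range m, (|β| * (D + s (ζ z + (i + 1)))) ^ 2
        ≤ ∑ i ∈ Finset.range m, 2 * β ^ 2 * (D ^ 2 + R (↑(ζ z + (i + 1)))) :=
          Finset.sum_le_sum fun i _ => hterm i
      _ = 2 * β ^ 2 * ((m : ℝ) * D ^ 2 + ∑ i ∈ Finset.range m, R (↑(ζ z + (i + 1)))) := by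
          rw [← Finset.mul_sum, Finset.sum_add_distrib, Finset.sum_const, Finset.card_range]
          ring
  -- reindex the sum of R's
  have hreindex : ∑ i ∈ Finset.range m, R (↑(ζ z + (i + 1)))
      = ∑ i ∈ Finset.range m, R ((z : ℤ) - (↑i + 1)) := by
    rw [← Finset.sum_range_reflect (fun i => R (↑(ζ z + (i + 1)))) m]
    apply Finset.sum_congr rfl
    intro i hi
    rw [Finset.mem_range] at hi
    congr 1
    have : ζ z + (m - 1 - i + 1) = z - 1 - i := by omega
    rw [this]
    have hle : i + 1 ≤ z := by omega
    omega
  -- bound the reindexed sum by the Icc sum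
  have hbound : ∑ i ∈ Finset.range m, R ((z : ℤ) - (↑i + 1))
      ≤ ∑ r ∈ Finset.Icc 1 (K - 1), R ((z : ℤ) - (r : ℤ)) := by
    have h1 : ∑ i ∈ Finset.range m, R ((z : ℤ) - (↑i + 1))
        = ∑ r ∈ Finset.Icc 1 m, R ((z : ℤ) - (r : ℤ)) := by
      rw [← Finset.Ico_add_one_right_eq_Icc, Finset.sum_Ico_eq_sum_range]
      apply Finset.sum_congr (by norm_num)
      intro i _
      congr 1
      push_cast
      ring
    rw [h1]
    apply Finset.sum_le_sum_of_subset_of_nonneg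
    · exact Finset.Icc_subset_Icc_right hmK
    · intro r _ _
      exact hRnonneg _
  -- put it together
  set S : ℝ := ∑ r ∈ Finset.Icc 1 (K - 1), R ((z : ℤ) - (r : ℤ)) with hS
  have hSnn : 0 ≤ S := Finset.sum_nonneg fun r _ => hRnonneg _
  have hRsum : ∑ i ∈ Finset.range m, R (↑(ζ z + (i + 1))) ≤ S := by
    rw [hreindex]; exact hbound
  have hmKr : (m : ℝ) ≤ (K : ℝ) - 1 := by
    have : (m : ℝ) ≤ ((K - 1 : ℕ) : ℝ) := by exact_mod_cast hmK
    have hK1 : ((K - 1 : ℕ) : ℝ) = (K : ℝ) - 1 := by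
      have : (1 : ℕ) ≤ K := hK
      push_cast [this]
      ring
    linarith [this, hK1.le, hK1.ge]
  have hmnn : (0 : ℝ) ≤ (m : ℝ) := Nat.cast_nonneg m
  have hD2 : (0 : ℝ) ≤ D ^ 2 := sq_nonneg D
  have hb2 : (0 : ℝ) ≤ β ^ 2 := sq_nonneg β
  calc R z ≤ (∑ i ∈ Finset.range m, |β| * (D + s (ζ z + (i + 1)))) ^ 2 := hsq
    _ ≤ (m : ℝ) * ∑ i ∈ Finset.range m, (|β| * (D + s (ζ z + (i + 1)))) ^ 2 := hcs
    _ ≤ (m : ℝ) * (2 * β ^ 2 * ((m : ℝ) * D ^ 2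
          + ∑ i ∈ Finset.range m, R (↑(ζ z + (i + 1))))) := by
        apply mul_le_mul_of_nonneg_left hsum hmnn
    _ ≤ 2 * ((K : ℝ) - 1) * β ^ 2 * (((K : ℝ) - 1) * D ^ 2 + S) := by
        have hRsnn : 0 ≤ ∑ i ∈ Finset.range m, R (↑(ζ z + (i + 1))) :=
          Finset.sum_nonneg fun i _ => hRnonneg _
        set T : ℝ := ∑ i ∈ Finset.range m, R (↑(ζ z + (i + 1))) with hT
        have h1 : (m : ℝ) * T ≤ ((K : ℝ) - 1) * S :=
          mul_le_mul hmKr hRsum hRsnn (by linarith)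
        have h2 : (m : ℝ) * (m : ℝ) ≤ ((K : ℝ) - 1) * ((K : ℝ) - 1) :=
          mul_le_mul hmKr hmKr hmnn (by linarith)
        have h3 : β ^ 2 * ((m : ℝ) * (m : ℝ) * D ^ 2)
            ≤ β ^ 2 * (((K : ℝ) - 1) * ((K : ℝ) - 1) * D ^ 2) :=
          mul_le_mul_of_nonneg_left (mul_le_mul_of_nonneg_right h2 hD2) hb2
        have h4 : β ^ 2 * ((m : ℝ) * T) ≤ β ^ 2 * (((K : ℝ) - 1) * S) :=
          mul_le_mul_of_nonneg_left h1 hb2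
        nlinarith [h3, h4]
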